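/- Let n ≥ 1, t < n, let g be a unitary 2×2 complex matrix, let M = I_{2^(n−1−t)} ⊗ g ⊗ I_{2^t} be the operator applying g to qubit t of an n-qubit state, and let v ∈ ℂ^(2^n). Then for every j < 2^(n−1), |(M·v)(z(j,t))|² + |(M·v)(o(j,t))|² = |v(z(j,t))|² + |v(o(j,t))|²; i.e., applying a single-qubit gate to target qubit t preserves the probability of each pair of amplitudes corresponding to outcomes differing only in qubit t. -/

import Mathlib

open Kronecker

/-- `z j t`: the binary expansion of `j` with digit `0` inserted at position `t`. -/
def z (j t : ℕ) : ℕ := (j / 2 ^ t) * 2 ^ (t + 1) + j % 2 ^ t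

/-- `o j t`: the binary expansion of `j` with digit `1` inserted at position `t`. -/
def o (j t : ℕ) : ℕ := z j t + 2 ^ t

/-- Applying a unitary single-qubit gate `g` to target qubit `t` (via the
Kronecker product `I ⊗ g ⊗ I`) preserves the probability of each pair of
amplitudes whose outcomes differ only in qubit `t`.  The index identification
`e` sends the Kronecker-product index `(prefix, target bit, suffix)` to the
outcome `prefix * 2^(t+1) + bit * 2^t + suffix`. -/
theorem gate_preserves_pair_probability (n t : ℕ) (hn : 1 ≤ n) (ht : t < n)
    (g : Matrix (Fin 2) (Fin 2) ℂ) (hg : g.conjTranspose * g = 1)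
    (e : (Fin (2 ^ (n - 1 - t)) × Fin 2 × Fin (2 ^ t)) ≃ Fin (2 ^ n))
    (he : ∀ p : Fin (2 ^ (n - 1 - t)) × Fin 2 × Fin (2 ^ t),
      ((e p : Fin (2 ^ n)) : ℕ) = (p.1 : ℕ) * 2 ^ (t + 1) + (p.2.1 : ℕ) * 2 ^ t + (p.2.2 : ℕ))
    (M : Matrix (Fin (2 ^ n)) (Fin (2 ^ n)) ℂ)
    (hM : M = Matrix.reindex e e
      ((1 : Matrix (Fin (2 ^ (n - 1 - t))) (Fin (2 ^ (n - 1 - t))) ℂ) ⊗ₖ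
        (g ⊗ₖ (1 : Matrix (Fin (2 ^ t)) (Fin (2 ^ t)) ℂ))))
    (v : Fin (2 ^ n) → ℂ)
    (j : ℕ) (hj : j < 2 ^ (n - 1))
    (iz io : Fin (2 ^ n)) (hiz : (iz : ℕ) = z j t) (hio : (io : ℕ) = o j t) :
    ‖M.mulVec v iz‖ ^ 2 + ‖M.mulVec v io‖ ^ 2
      = ‖v iz‖ ^ 2 + ‖v io‖ ^ 2 := by
  subst hM
  have ha : j / 2 ^ t < 2 ^ (n - 1 - t) := by
    apply Nat.div_lt_of_lt_mul
    calc j < 2 ^ (n - 1) := hj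
      _ = 2 ^ t * 2 ^ (n - 1 - t) := by rw [← pow_add]; congr 1; omega
  have hb : j % 2 ^ t < 2 ^ t := Nat.mod_lt _ (by positivity)
  set a : Fin (2 ^ (n - 1 - t)) := ⟨j / 2 ^ t, ha⟩ with ha'
  set b : Fin (2 ^ t) := ⟨j % 2 ^ t, hb⟩ with hb'
  have hez : e (a, 0, b) = iz := by
    apply Fin.ext; rw [he]; simp [hiz, z, ha', hb']
  have heo : e (a, 1, b) = io := by
    apply Fin.ext; rw [he]; simp [hio, o, z, ha', hb']; ring
  have hmul : ∀ (c : Fin 2) (i : Fin (2 ^ n)), e (a, c, b) = i →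
      (Matrix.reindex e e
        ((1 : Matrix (Fin (2 ^ (n - 1 - t))) (Fin (2 ^ (n - 1 - t))) ℂ) ⊗ₖ
          (g ⊗ₖ (1 : Matrix (Fin (2 ^ t)) (Fin (2 ^ t)) ℂ)))).mulVec v i
        = g c 0 * v iz + g c 1 * v io := by
    rintro c i rfl
    rw [Matrix.mulVec, dotProduct]
    rw [← Equiv.sum_comp e (fun k =>
      (Matrix.reindex e e
        ((1 : Matrix (Fin (2 ^ (n - 1 - t))) (Fin (2 ^ (n - 1 - t))) ℂ) ⊗ₖ
          (g ⊗ₖ (1 : Matrix (Fin (2 ^ t)) (Fin (2 ^ t)) ℂ)))) (e (a, c, b)) k * v k)]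
    simp only [Matrix.reindex_apply, Matrix.submatrix_apply, Equiv.symm_apply_apply,
      Fintype.sum_prod_type, Matrix.kroneckerMap_apply, Matrix.one_apply,
      ite_mul, one_mul, zero_mul, mul_ite, mul_one, mul_zero,
      Finset.sum_ite_eq, Finset.sum_ite_eq', Finset.mem_univ, if_true]
    rw [Finset.sum_comm]
    simp only [Finset.sum_ite_eq, Finset.sum_ite_eq', Finset.mem_univ, if_true]
    rw [Fin.sum_univ_two, hez, heo]
  rw [hmul 0 iz hez, hmul 1 io heo]
  have hcol : ∀ i k : Fin 2,
      (starRingEnd ℂ) (g 0 i) * g 0 k + (starRingEnd ℂ) (g 1 i) * g 1 k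
        = if i = k then 1 else 0 := by
    intro i k
    have := congrFun (congrFun hg i) k
    simpa [Matrix.mul_apply, Matrix.conjTranspose_apply, Fin.sum_univ_two,
      Matrix.one_apply] using this
  have h1 : (starRingEnd ℂ) (g 0 0) * g 0 0 + (starRingEnd ℂ) (g 1 0) * g 1 0 = 1 := by
    simpa using hcol 0 0
  have h2 : (starRingEnd ℂ) (g 0 1) * g 0 1 + (starRingEnd ℂ) (g 1 1) * g 1 1 = 1 := by
    simpa using hcol 1 1
  have h3 : (starRingEnd ℂ) (g 0 1) * g 0 0 + (starRingEnd ℂ) (g 1 1) * g 1 0 = 0 := by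
    simpa using hcol 1 0
  have h4 : (starRingEnd ℂ) (g 0 0) * g 0 1 + (starRingEnd ℂ) (g 1 0) * g 1 1 = 0 := by
    simpa using hcol 0 1
  set x := v iz
  set y := v io
  have keyC : (g 0 0 * x + g 0 1 * y) * (starRingEnd ℂ) (g 0 0 * x + g 0 1 * y)
      + (g 1 0 * x + g 1 1 * y) * (starRingEnd ℂ) (g 1 0 * x + g 1 1 * y)
      = x * (starRingEnd ℂ) x + y * (starRingEnd ℂ) y := by
    simp only [map_add, map_mul]
    linear_combination (x * (starRingEnd ℂ) x) * h1 + (y * (starRingEnd ℂ) y) * h2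
      + (x * (starRingEnd ℂ) y) * h3 + (y * (starRingEnd ℂ) x) * h4
  rw [Complex.mul_conj, Complex.mul_conj, Complex.mul_conj, Complex.mul_conj] at keyC
  have key : Complex.normSq (g 0 0 * x + g 0 1 * y)
      + Complex.normSq (g 1 0 * x + g 1 1 * y) = Complex.normSq x + Complex.normSq y := by
    exact_mod_cast keyC
  rw [Complex.sq_norm, Complex.sq_norm, Complex.sq_norm, Complex.sq_norm, key]
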